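/- Let X, Y be finite sets, Θ compact, p(x,y|θ) continuous in θ. Then the minimax value of the KL prediction problem equals the maximal conditional mutual information: inf_q sup_{θ∈Θ} Σ_{x,y} p(x,y|θ) log(p(y|x,θ)/q(y;x)) = sup_{π∈P} I_{θ,y|x}(π), where the infimum is over all predictive densities q. -/

import Mathlib

open MeasureTheory

noncomputable def negEnt (u : ℝ) : ℝ := u * Real.log u

noncomputable def pMix {Θ X Y : Type*} [MeasurableSpace Θ]
    (p : X → Y → Θ → ℝ) (π : ProbabilityMeasure Θ) (x : X) (y : Y) : ℝ :=
  ∫ θ, p x y θ ∂(π : Measure Θ)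

noncomputable def condMutualInfo {Θ X Y : Type*} [MeasurableSpace Θ] [Fintype X] [Fintype Y]
    (p : X → Y → Θ → ℝ) (π : ProbabilityMeasure Θ) : ℝ :=
  (∫ θ, ∑ x : X, ∑ y : Y, negEnt (p x y θ) ∂(π : Measure Θ))
    - ∑ x : X, ∑ y : Y, negEnt (pMix p π x y)
    - (∫ θ, ∑ x : X, negEnt (∑ y : Y, p x y θ) ∂(π : Measure Θ))
    + ∑ x : X, negEnt (∑ y : Y, pMix p π x y)

def IsPredDensity {X Y : Type*} [Fintype Y] (q : X → Y → ℝ) : Prop :=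
  (∀ x y, 0 ≤ q x y ∧ q x y ≤ 1) ∧ ∀ x, ∑ y : Y, q x y = 1

noncomputable def klTerm (a b c : ℝ) : EReal :=
  if a = 0 then 0 else if c = 0 then ⊤ else ((a * Real.log (b / c) : ℝ) : EReal)

noncomputable def risk {Θ X Y : Type*} [Fintype X] [Fintype Y]
    (p : X → Y → Θ → ℝ) (q : X → Y → ℝ) (θ : Θ) : EReal :=
  ∑ x : X, ∑ y : Y, klTerm (p x y θ) (p x y θ / ∑ y' : Y, p x y' θ) (q x y)


set_option linter.unusedSectionVars false
set_option maxHeartbeats 1000000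

/-! ### Auxiliary definitions for the finite-dimensional reduction -/

noncomputable def fpay {X Y : Type*} [Fintype X] [Fintype Y]
    (q : X → Y → ℝ) (z : ℝ × (X → Y → ℝ)) : ℝ :=
  z.1 - ∑ x : X, ∑ y : Y, z.2 x y * Real.log (q x y)

noncomputable def PhiFn {X Y : Type*} [Fintype X] [Fintype Y] (m : X → Y → ℝ) : ℝ :=
  - (∑ x : X, ∑ y : Y, negEnt (m x y)) + ∑ x : X, negEnt (∑ y : Y, m x y)

noncomputable def Ffun {X Y : Type*} [Fintype X] [Fintype Y] (z : ℝ × (X → Y → ℝ)) : ℝ :=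
  z.1 + PhiFn z.2

def PosDensity {X Y : Type*} [Fintype Y] (q : X → Y → ℝ) : Prop :=
  (∀ x y, 0 < q x y) ∧ ∀ x, ∑ y : Y, q x y = 1

noncomputable def gfun {Θ X Y : Type*} [Fintype X] [Fintype Y] (p : X → Y → Θ → ℝ) (θ : Θ) : ℝ :=
  (∑ x : X, ∑ y : Y, negEnt (p x y θ)) - ∑ x : X, negEnt (∑ y : Y, p x y θ)

noncomputable def zmap {Θ X Y : Type*} [Fintype X] [Fintype Y] (p : X → Y → Θ → ℝ) (θ : Θ) :
    ℝ × (X → Y → ℝ) := (gfun p θ, fun x y => p x y θ)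

noncomputable def clamp (t : ℝ) : ℝ := max 0 (min 1 t)

noncomputable def qseg {X Y : Type*} (q0 q1 : X → Y → ℝ) (t : ℝ) : X → Y → ℝ :=
  fun x y => (1 - clamp t) * q0 x y + clamp t * q1 x y

section AuxLemmas
variable {X Y : Type*} [Fintype X] [Fintype Y]

/-- Gibbs' inequality, row version. -/
lemma gibbs_row (u w : Y → ℝ) (hu : ∀ y, 0 ≤ u y) (hw : ∀ y, 0 ≤ w y)
    (hw1 : ∑ y : Y, w y ≤ 1) (hpos : ∀ y, 0 < u y → 0 < w y) :
    - (∑ y : Y, negEnt (u y)) + negEnt (∑ y : Y, u y) ≤ - ∑ y : Y, u y * Real.log (w y) := by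
  set S := ∑ y : Y, u y with hS
  have hS0 : 0 ≤ S := Finset.sum_nonneg fun y _ => hu y
  -- goal is equivalent to  ∑ u_y * log (S * w y / u y) ≤ 0
  have key : ∑ y : Y, u y * Real.log (S * w y / u y) ≤ 0 := by
    have hle : ∀ y ∈ Finset.univ, u y * Real.log (S * w y / u y) ≤ S * w y - u y := by
      intro y _
      rcases eq_or_lt_of_le (hu y) with h0 | h0
      · rw [← h0]
        have : (0:ℝ) ≤ S * w y := mul_nonneg hS0 (hw y)
        simpa using this
      · have hwy := hpos y h0
        have hSpos : 0 < S := lt_of_lt_of_le h0 (Finset.single_le_sum (fun y _ => hu y) (Finset.mem_univ y))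
        have harg : 0 < S * w y / u y := div_pos (mul_pos hSpos hwy) h0
        have := Real.log_le_sub_one_of_pos harg
        calc u y * Real.log (S * w y / u y) ≤ u y * (S * w y / u y - 1) := by
              exact mul_le_mul_of_nonneg_left this (hu y)
          _ = S * w y - u y := by field_simp
    calc ∑ y : Y, u y * Real.log (S * w y / u y) ≤ ∑ y : Y, (S * w y - u y) :=
          Finset.sum_le_sum hle
      _ = S * (∑ y : Y, w y) - S := by rw [Finset.sum_sub_distrib, ← Finset.mul_sum]
      _ ≤ S * 1 - S := by
          apply sub_le_sub_right
          exact mul_le_mul_of_nonneg_left hw1 hS0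
      _ = 0 := by ring
  -- rewrite the key sum termwise
  have expand : ∀ y, u y * Real.log (S * w y / u y)
      = - (u y * Real.log (u y)) + u y * Real.log S + u y * Real.log (w y) := by
    intro y
    rcases eq_or_lt_of_le (hu y) with h0 | h0
    · rw [← h0]; ring
    · have hwy := hpos y h0
      have hSpos : 0 < S := lt_of_lt_of_le h0 (Finset.single_le_sum (fun y _ => hu y) (Finset.mem_univ y))
      rw [Real.log_div (by positivity) (ne_of_gt h0), Real.log_mul (ne_of_gt hSpos) (ne_of_gt hwy)]
      ring
  have sumS : ∑ y : Y, u y * Real.log S = S * Real.log S := by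
    rw [← Finset.sum_mul]
  have : ∑ y : Y, u y * Real.log (S * w y / u y)
      = - (∑ y : Y, negEnt (u y)) + negEnt S + ∑ y : Y, u y * Real.log (w y) := by
    simp only [expand, Finset.sum_add_distrib, Finset.sum_neg_distrib]
    rw [sumS]
    simp [negEnt]
  linarith [key, this.symm.trans_le key]


lemma PhiFn_le (m q : X → Y → ℝ) (hm : ∀ x y, 0 ≤ m x y) (hq : ∀ x y, 0 ≤ q x y)
    (hq1 : ∀ x, ∑ y : Y, q x y ≤ 1) (hpos : ∀ x y, 0 < m x y → 0 < q x y) :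
    PhiFn m ≤ - ∑ x : X, ∑ y : Y, m x y * Real.log (q x y) := by
  have h : PhiFn m = ∑ x : X, (- (∑ y : Y, negEnt (m x y)) + negEnt (∑ y : Y, m x y)) := by
    rw [PhiFn, Finset.sum_add_distrib, Finset.sum_neg_distrib]
  rw [h, ← Finset.sum_neg_distrib]
  exact Finset.sum_le_sum fun x _ =>
    gibbs_row (m x) (q x) (hm x) (hq x) (hq1 x) (hpos x)
/-- `fpay q` is linear in `z`. -/
lemma fpay_combo (q : X → Y → ℝ) (z z' : ℝ × (X → Y → ℝ)) (a b : ℝ) :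
    fpay q (a • z + b • z') = a * fpay q z + b * fpay q z' := by
  have hlin : ∀ (c : ℝ) (w : X → Y → ℝ),
      ∑ x : X, ∑ y : Y, (c * w x y) * Real.log (q x y)
        = c * ∑ x : X, ∑ y : Y, w x y * Real.log (q x y) := by
    intro c w
    simp [Finset.mul_sum, mul_assoc]
  simp only [fpay, Prod.fst_add, Prod.smul_fst, Prod.snd_add, Prod.smul_snd, Pi.add_apply,
    Pi.smul_apply, smul_eq_mul, add_mul, Finset.sum_add_distrib]
  rw [hlin a z.2, hlin b z'.2]
  ring

lemma continuous_fpay (q : X → Y → ℝ) : Continuous (fpay q) := by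
  apply Continuous.sub continuous_fst
  exact continuous_finset_sum _ fun x _ => continuous_finset_sum _ fun y _ => by
    fun_prop

lemma convex_superlevel (A : Set (ℝ × (X → Y → ℝ))) (hA : Convex ℝ A) (q : X → Y → ℝ) (c : ℝ) :
    Convex ℝ {z ∈ A | c ≤ fpay q z} := by
  intro z hz z' hz' a b ha hb hab
  refine ⟨hA hz.1 hz'.1 ha hb hab, ?_⟩
  rw [fpay_combo]
  calc c = a * c + b * c := by rw [← add_mul, hab, one_mul]
    _ ≤ a * fpay q z + b * fpay q z' :=
      add_le_add (mul_le_mul_of_nonneg_left hz.2 ha) (mul_le_mul_of_nonneg_left hz'.2 hb)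

lemma clamp_mem (t : ℝ) : clamp t ∈ Set.Icc (0:ℝ) 1 :=
  ⟨le_max_left _ _, max_le zero_le_one (min_le_left _ _)⟩

lemma clamp_of_mem {t : ℝ} (ht : t ∈ Set.Icc (0:ℝ) 1) : clamp t = t := by
  rcases ht with ⟨h0, h1⟩
  rw [clamp, min_eq_right h1, max_eq_right h0]

lemma continuous_clamp : Continuous clamp :=
  continuous_const.max (continuous_const.min continuous_id)

lemma qseg_posDensity (q0 q1 : X → Y → ℝ) (h0 : PosDensity q0) (h1 : PosDensity q1) (t : ℝ) :
    PosDensity (qseg q0 q1 t) := by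
  obtain ⟨hc0, hc1⟩ := clamp_mem t
  constructor
  · intro x y
    rcases eq_or_lt_of_le hc0 with h | h
    · simp only [qseg, ← h]
      simpa using h0.1 x y
    · have hA : 0 ≤ (1 - clamp t) * q0 x y :=
        mul_nonneg (by linarith) (h0.1 x y).le
      have hB : 0 < clamp t * q1 x y := mul_pos h (h1.1 x y)
      simp only [qseg]
      linarith
  · intro x
    simp only [qseg, Finset.sum_add_distrib, ← Finset.mul_sum, h0.2 x, h1.2 x]
    ring

lemma qseg_zero (q0 q1 : X → Y → ℝ) : qseg q0 q1 0 = q0 := by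
  funext x y; simp [qseg, clamp]

lemma qseg_one (q0 q1 : X → Y → ℝ) : qseg q0 q1 1 = q1 := by
  funext x y; simp [qseg, clamp]

/-- convexity in `t` : value on segment is at most max of endpoints, for `z` with
nonnegative second component. -/
lemma fpay_qseg_le_max (q0 q1 : X → Y → ℝ) (h0 : PosDensity q0) (h1 : PosDensity q1)
    (z : ℝ × (X → Y → ℝ)) (hz : ∀ x y, 0 ≤ z.2 x y) (t : ℝ) :
    fpay (qseg q0 q1 t) z ≤ max (fpay q0 z) (fpay q1 z) := by
  set s := clamp t with hs
  obtain ⟨hs0, hs1⟩ := clamp_mem t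
  have hlog : ∀ x y, (1 - s) * Real.log (q0 x y) + s * Real.log (q1 x y)
      ≤ Real.log (qseg q0 q1 t x y) := by
    intro x y
    have hq0 := h0.1 x y
    have hq1 := h1.1 x y
    have hgm : q0 x y ^ (1 - s) * q1 x y ^ s ≤ (1 - s) * q0 x y + s * q1 x y :=
      Real.geom_mean_le_arith_mean2_weighted (by linarith) hs0 hq0.le hq1.le (by ring)
    have hpos : (0:ℝ) < q0 x y ^ (1 - s) * q1 x y ^ s := by positivity
    have := Real.log_le_log hpos hgm
    rw [Real.log_mul (by positivity) (by positivity), Real.log_rpow hq0, Real.log_rpow hq1] at this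
    exact this.trans_eq (by rw [qseg])
  have key : fpay (qseg q0 q1 t) z ≤ (1 - s) * fpay q0 z + s * fpay q1 z := by
    have expand : ∑ x : X, ∑ y : Y, z.2 x y *
          ((1 - s) * Real.log (q0 x y) + s * Real.log (q1 x y))
        = (1 - s) * (∑ x : X, ∑ y : Y, z.2 x y * Real.log (q0 x y))
          + s * (∑ x : X, ∑ y : Y, z.2 x y * Real.log (q1 x y)) := by
      rw [Finset.mul_sum, Finset.mul_sum, ← Finset.sum_add_distrib]
      refine Finset.sum_congr rfl fun x _ => ?_
      rw [Finset.mul_sum, Finset.mul_sum, ← Finset.sum_add_distrib]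
      refine Finset.sum_congr rfl fun y _ => ?_
      ring
    have step : fpay (qseg q0 q1 t) z ≤ z.1 - ∑ x : X, ∑ y : Y, z.2 x y *
          ((1 - s) * Real.log (q0 x y) + s * Real.log (q1 x y)) := by
      apply sub_le_sub_left
      exact Finset.sum_le_sum fun x _ => Finset.sum_le_sum fun y _ =>
        mul_le_mul_of_nonneg_left (hlog x y) (hz x y)
    refine step.trans_eq ?_
    rw [expand]
    simp only [fpay]
    ring
  refine key.trans ?_
  have h0' : fpay q0 z ≤ max (fpay q0 z) (fpay q1 z) := le_max_left _ _
  have h1' : fpay q1 z ≤ max (fpay q0 z) (fpay q1 z) := le_max_right _ _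
  calc (1 - s) * fpay q0 z + s * fpay q1 z
      ≤ (1 - s) * max (fpay q0 z) (fpay q1 z) + s * max (fpay q0 z) (fpay q1 z) :=
        add_le_add (mul_le_mul_of_nonneg_left h0' (by linarith))
          (mul_le_mul_of_nonneg_left h1' hs0)
    _ = max (fpay q0 z) (fpay q1 z) := by ring

lemma continuous_fpay_qseg (q0 q1 : X → Y → ℝ) (h0 : PosDensity q0) (h1 : PosDensity q1) :
    Continuous (fun p : (ℝ × (X → Y → ℝ)) × ℝ => fpay (qseg q0 q1 p.2) p.1) := by
  simp only [fpay]
  apply Continuous.sub (continuous_fst.comp continuous_fst)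
  apply continuous_finset_sum _ fun x _ => continuous_finset_sum _ fun y _ => ?_
  apply Continuous.mul
  · exact (continuous_apply y).comp ((continuous_apply x).comp
      (continuous_snd.comp continuous_fst))
  · apply Continuous.log
    · exact ((continuous_const.sub (continuous_clamp.comp continuous_snd)).mul continuous_const).add
        ((continuous_clamp.comp continuous_snd).mul continuous_const)
    · intro p
      exact ne_of_gt ((qseg_posDensity q0 q1 h0 h1 p.2).1 x y)

/-- Komiya's two-point lemma. -/
lemma komiya_pair (A : Set (ℝ × (X → Y → ℝ))) (hAc : IsCompact A) (hAconv : Convex ℝ A)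
    (hAnn : ∀ z ∈ A, ∀ x y, 0 ≤ z.2 x y)
    (q0 q1 : X → Y → ℝ) (h0 : PosDensity q0) (h1 : PosDensity q1)
    {α β : ℝ} (hαβ : α < β)
    (hmin : ∀ z ∈ A, min (fpay q0 z) (fpay q1 z) ≤ α) :
    ∃ t ∈ Set.Icc (0:ℝ) 1, ∀ z ∈ A, fpay (qseg q0 q1 t) z < β := by
  by_contra hcon
  push_neg at hcon
  have h : ∀ t ∈ Set.Icc (0:ℝ) 1, ∃ z ∈ A, β ≤ fpay (qseg q0 q1 t) z := by
    intro t ht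
    obtain ⟨z, hz, hge⟩ := hcon t ht
    exact ⟨z, hz, hge⟩
  set G : (ℝ × (X → Y → ℝ)) × ℝ → ℝ := fun p => fpay (qseg q0 q1 p.2) p.1 with hG
  have hGc : Continuous G := continuous_fpay_qseg q0 q1 h0 h1
  set β₁ := α + (β - α)/3 with hβ₁
  set β₂ := α + 2*(β - α)/3 with hβ₂
  have hαβ₁ : α < β₁ := by rw [hβ₁]; linarith
  have hβ₁β₂ : β₁ < β₂ := by rw [hβ₁, hβ₂]; linarith
  have hβ₂β : β₂ < β := by rw [hβ₂]; linarith
  -- the connectedness claim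
  have claim_conn : ∀ t : ℝ,
      (∃ z ∈ A, β ≤ G (z, t) ∧ β₁ < fpay q0 z) →
      (∃ z ∈ A, β ≤ G (z, t) ∧ β₁ < fpay q1 z) → False := by
    intro t hex0 hex1
    set K := {z ∈ A | β ≤ fpay (qseg q0 q1 t) z} with hK
    have hKconv : Convex ℝ K := convex_superlevel A hAconv _ _
    have hKpre : IsPreconnected K := hKconv.isPreconnected
    set U := {z : ℝ × (X → Y → ℝ) | β₁ < fpay q0 z} with hU
    set V := {z : ℝ × (X → Y → ℝ) | β₁ < fpay q1 z} with hV
    have hUopen : IsOpen U := isOpen_lt continuous_const (continuous_fpay q0)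
    have hVopen : IsOpen V := isOpen_lt continuous_const (continuous_fpay q1)
    have hsub : K ⊆ U ∪ V := by
      intro z hz
      have hmax : β ≤ max (fpay q0 z) (fpay q1 z) :=
        le_trans hz.2 (fpay_qseg_le_max q0 q1 h0 h1 z (hAnn z hz.1) t)
      have : β₁ < max (fpay q0 z) (fpay q1 z) := lt_of_lt_of_le (by linarith) hmax
      rcases lt_max_iff.mp this with h' | h'
      · exact Or.inl h'
      · exact Or.inr h'
    obtain ⟨z0, hz0A, hz0⟩ := hex0
    obtain ⟨z1, hz1A, hz1⟩ := hex1
    have hne0 : (K ∩ U).Nonempty := ⟨z0, ⟨hz0A, hz0.1⟩, hz0.2⟩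
    have hne1 : (K ∩ V).Nonempty := ⟨z1, ⟨hz1A, hz1.1⟩, hz1.2⟩
    obtain ⟨z, hzK, hzU, hzV⟩ := hKpre U V hUopen hVopen hsub hne0 hne1
    have : min (fpay q0 z) (fpay q1 z) ≤ α := hmin z hzK.1
    have : β₁ < min (fpay q0 z) (fpay q1 z) := lt_min hzU hzV
    linarith
  -- sets I and J
  set I := {t : ℝ | t ∈ Set.Icc (0:ℝ) 1 ∧ ∃ z ∈ A, β ≤ G (z, t) ∧ β₂ ≤ fpay q0 z} with hIdef
  set J := {t : ℝ | t ∈ Set.Icc (0:ℝ) 1 ∧ ∃ z ∈ A, β ≤ G (z, t) ∧ β₂ ≤ fpay q1 z} with hJdef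
  have hcompIJ : ∀ (q : X → Y → ℝ),
      IsCompact {t : ℝ | t ∈ Set.Icc (0:ℝ) 1 ∧ ∃ z ∈ A, β ≤ G (z, t) ∧ β₂ ≤ fpay q z} := by
    intro q
    have heq : {t : ℝ | t ∈ Set.Icc (0:ℝ) 1 ∧ ∃ z ∈ A, β ≤ G (z, t) ∧ β₂ ≤ fpay q z}
        = Prod.snd '' ((A ×ˢ Set.Icc (0:ℝ) 1) ∩ {p | β ≤ G p ∧ β₂ ≤ fpay q p.1}) := by
      ext t
      constructor
      · rintro ⟨ht, z, hzA, h1', h2'⟩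
        exact ⟨(z, t), ⟨⟨hzA, ht⟩, h1', h2'⟩, rfl⟩
      · rintro ⟨⟨z, t'⟩, ⟨⟨hzA, ht⟩, h1', h2'⟩, rfl⟩
        exact ⟨ht, z, hzA, h1', h2'⟩
    rw [heq]
    apply IsCompact.image _ continuous_snd
    apply IsCompact.inter_right (hAc.prod isCompact_Icc)
    exact IsClosed.inter (isClosed_le continuous_const hGc)
      (isClosed_le continuous_const ((continuous_fpay q).comp continuous_fst))
  have hIcomp : IsCompact I := hcompIJ q0
  have hJcomp : IsCompact J := hcompIJ q1
  have hIJ : Set.Icc (0:ℝ) 1 ⊆ I ∪ J := by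
    intro t ht
    obtain ⟨z0, hz0A, hz0⟩ := h t ht
    by_cases hex0 : ∃ z ∈ A, β ≤ G (z, t) ∧ β₁ < fpay q0 z
    · by_cases hex1 : ∃ z ∈ A, β ≤ G (z, t) ∧ β₁ < fpay q1 z
      · exact absurd (claim_conn t hex0 hex1) (fun h => h)
      · -- no z with large fpay q1 ⇒ z0 belongs to I
        push_neg at hex1
        have h1le : fpay q1 z0 ≤ β₁ := hex1 z0 hz0A hz0
        have hmax : β ≤ max (fpay q0 z0) (fpay q1 z0) :=
          le_trans hz0 (fpay_qseg_le_max q0 q1 h0 h1 z0 (hAnn z0 hz0A) t)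
        have h0ge : β₂ ≤ fpay q0 z0 := by
          rcases le_max_iff.mp hmax with h' | h'
          · linarith
          · linarith
        exact Or.inl ⟨ht, z0, hz0A, hz0, h0ge⟩
    · push_neg at hex0
      have h0le : fpay q0 z0 ≤ β₁ := hex0 z0 hz0A hz0
      have hmax : β ≤ max (fpay q0 z0) (fpay q1 z0) :=
        le_trans hz0 (fpay_qseg_le_max q0 q1 h0 h1 z0 (hAnn z0 hz0A) t)
      have h1ge : β₂ ≤ fpay q1 z0 := by
        rcases le_max_iff.mp hmax with h' | h'
        · linarith
        · linarith
      exact Or.inr ⟨ht, z0, hz0A, hz0, h1ge⟩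
  have hdisj : ∀ t, t ∈ I → t ∈ J → False := by
    rintro t ⟨ht, z, hzA, hz1', hz2'⟩ ⟨_, z', hz'A, hz'1, hz'2⟩
    exact claim_conn t ⟨z, hzA, hz1', lt_of_lt_of_le hβ₁β₂ hz2'⟩
      ⟨z', hz'A, hz'1, lt_of_lt_of_le hβ₁β₂ hz'2⟩
  have h0I : (0:ℝ) ∈ I := by
    obtain ⟨z, hzA, hz⟩ := h 0 (by constructor <;> norm_num)
    refine ⟨by constructor <;> norm_num, z, hzA, hz, ?_⟩
    rw [show fpay (qseg q0 q1 0) z = fpay q0 z by rw [qseg_zero]] at hz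
    linarith
  have h1J : (1:ℝ) ∈ J := by
    obtain ⟨z, hzA, hz⟩ := h 1 (by constructor <;> norm_num)
    refine ⟨by constructor <;> norm_num, z, hzA, hz, ?_⟩
    rw [show fpay (qseg q0 q1 1) z = fpay q1 z by rw [qseg_one]] at hz
    linarith
  -- connectedness contradiction via sSup
  have hInne : I.Nonempty := ⟨0, h0I⟩
  set tstar := sSup I with htstardef
  have htstarI : tstar ∈ I := hIcomp.sSup_mem hInne
  have htstarIcc : tstar ∈ Set.Icc (0:ℝ) 1 := htstarI.1
  have htstarlt : tstar < 1 := by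
    rcases lt_or_eq_of_le htstarIcc.2 with h' | h'
    · exact h'
    · exact absurd (hdisj 1 (h' ▸ htstarI) h1J) (fun h => h)
  set u : ℕ → ℝ := fun n => min (tstar + 1/(n+1)) 1 with hu
  have huIcc : ∀ n, u n ∈ Set.Icc (0:ℝ) 1 := by
    intro n
    constructor
    · apply le_min
      · have : (0:ℝ) < 1/(n+1) := by positivity
        linarith [htstarIcc.1]
      · norm_num
    · exact min_le_right _ _
  have hugt : ∀ n, tstar < u n := by
    intro n
    apply lt_min
    · have : (0:ℝ) < 1/(n+1) := by positivity
      linarith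
    · exact htstarlt
  have hunJ : ∀ n, u n ∈ J := by
    intro n
    rcases hIJ (huIcc n) with h' | h'
    · exfalso
      have : u n ≤ tstar := le_csSup hIcomp.bddAbove h'
      exact absurd this (not_le.mpr (hugt n))
    · exact h'
  have hulim : Filter.Tendsto u Filter.atTop (nhds tstar) := by
    have h1 : Filter.Tendsto (fun n : ℕ => tstar + 1/(n+1 : ℝ)) Filter.atTop (nhds (tstar + 0)) :=
      Filter.Tendsto.add tendsto_const_nhds tendsto_one_div_add_atTop_nhds_zero_nat
    rw [add_zero] at h1
    have h2 : Filter.Tendsto u Filter.atTop (nhds (min tstar 1)) :=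
      Filter.Tendsto.min h1 tendsto_const_nhds
    rwa [min_eq_left htstarIcc.2] at h2
  have : tstar ∈ J := hJcomp.isClosed.mem_of_tendsto hulim
    (Filter.Eventually.of_forall hunJ)
  exact hdisj tstar htstarI this

/-- Komiya's induction: finite families. -/
lemma komiya_finite [Nonempty Y] :
    ∀ (n : ℕ) (A : Set (ℝ × (X → Y → ℝ))), IsCompact A → Convex ℝ A →
    (∀ z ∈ A, ∀ x y, 0 ≤ z.2 x y) →
    ∀ (qs : Fin n → X → Y → ℝ), (∀ i, PosDensity (qs i)) →
    ∀ {α β : ℝ}, α < β →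
    (∀ z ∈ A, ∃ i, fpay (qs i) z ≤ α) →
    ∃ q, PosDensity q ∧ ∀ z ∈ A, fpay q z < β := by
  intro n
  induction n with
  | zero =>
    intro A hAc hAconv hAnn qs hqs α β hαβ hcov
    have hA : A = ∅ := by
      by_contra hne
      obtain ⟨z, hz⟩ := Set.nonempty_iff_ne_empty.mpr hne
      obtain ⟨i, _⟩ := hcov z hz
      exact absurd i.2 (by simp)
    refine ⟨fun _ _ => (Fintype.card Y : ℝ)⁻¹, ⟨fun x y => ?_, fun x => ?_⟩, ?_⟩
    · have : (0:ℝ) < Fintype.card Y := by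
        have := Fintype.card_pos (α := Y)
        exact_mod_cast this
      positivity
    · rw [Finset.sum_const, Finset.card_univ, nsmul_eq_mul]
      have : (Fintype.card Y : ℝ) ≠ 0 := by
        have := Fintype.card_pos (α := Y)
        positivity
      field_simp
    · intro z hz
      rw [hA] at hz
      exact absurd hz (Set.notMem_empty z)
  | succ n ih =>
    intro A hAc hAconv hAnn qs hqs α β hαβ hcov
    set θ₁ := α + (β - α)/2 with hθ₁
    have hαθ : α < θ₁ := by rw [hθ₁]; linarith
    have hθβ : θ₁ < β := by rw [hθ₁]; linarith
    set qlast := qs (Fin.last n) with hqlast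
    set B := {z ∈ A | θ₁ ≤ fpay qlast z} with hB
    have hBc : IsCompact B := by
      apply IsCompact.inter_right hAc
      exact isClosed_le continuous_const (continuous_fpay qlast)
    have hBconv : Convex ℝ B := convex_superlevel A hAconv _ _
    have hBnn : ∀ z ∈ B, ∀ x y, 0 ≤ z.2 x y := fun z hz => hAnn z hz.1
    have hBcov : ∀ z ∈ B, ∃ i : Fin n, fpay (qs i.castSucc) z ≤ α := by
      intro z hz
      obtain ⟨i, hi⟩ := hcov z hz.1
      have : i ≠ Fin.last n := by
        intro heq
        rw [heq] at hi
        exact absurd (hi.trans_lt hαθ) (not_lt.mpr hz.2)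
      obtain ⟨j, rfl⟩ := Fin.exists_castSucc_eq.mpr this
      exact ⟨j, hi⟩
    obtain ⟨q', hq', hq'B⟩ := ih B hBc hBconv hBnn (fun i => qs i.castSucc)
      (fun i => hqs _) hαθ hBcov
    -- now on all of A, min (fpay q' z) (fpay qlast z) ≤ θ₁
    have hmin : ∀ z ∈ A, min (fpay q' z) (fpay qlast z) ≤ θ₁ := by
      intro z hz
      by_cases hzB : θ₁ ≤ fpay qlast z
      · exact le_trans (min_le_left _ _) (hq'B z ⟨hz, hzB⟩).le
      · exact le_trans (min_le_right _ _) (not_le.mp hzB).le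
    obtain ⟨t, _, ht⟩ := komiya_pair A hAc hAconv hAnn q' qlast hq' (hqs _) hθβ hmin
    exact ⟨qseg q' qlast t, qseg_posDensity q' qlast hq' (hqs _) t, ht⟩


end AuxLemmas

section ERealHelpers

lemma coe_esum {ι : Type*} (s : Finset ι) (f : ι → ℝ) :
    ((∑ i ∈ s, f i : ℝ) : EReal) = ∑ i ∈ s, ((f i : ℝ) : EReal) := by
  induction s using Finset.cons_induction with
  | empty => simp
  | cons a s ha ih => rw [Finset.sum_cons, Finset.sum_cons, EReal.coe_add, ih]

lemma esum_ne_bot {ι : Type*} (s : Finset ι) (f : ι → EReal) (h : ∀ i ∈ s, f i ≠ ⊥) :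
    ∑ i ∈ s, f i ≠ ⊥ := by
  induction s using Finset.cons_induction with
  | empty => simp
  | cons a s ha ih =>
    rw [Finset.sum_cons]
    intro hbot
    rcases EReal.add_eq_bot_iff.mp hbot with h' | h'
    · exact h a (Finset.mem_cons_self a s) h'
    · exact ih (fun i hi => h i (Finset.mem_cons_of_mem hi)) h'

lemma esum_eq_top {ι : Type*} (s : Finset ι) (f : ι → EReal) (h : ∀ i ∈ s, f i ≠ ⊥)
    (htop : ∃ i ∈ s, f i = ⊤) : ∑ i ∈ s, f i = ⊤ := by
  induction s using Finset.cons_induction with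
  | empty => obtain ⟨i, hi, _⟩ := htop; exact absurd hi (by simp)
  | cons a s ha ih =>
    rw [Finset.sum_cons]
    obtain ⟨i, hi, hitop⟩ := htop
    rcases Finset.mem_cons.mp hi with rfl | hi'
    · rw [hitop]
      exact EReal.top_add_of_ne_bot (esum_ne_bot s f (fun j hj => h j (Finset.mem_cons_of_mem hj)))
    · rw [ih (fun j hj => h j (Finset.mem_cons_of_mem hj)) ⟨i, hi', hitop⟩]
      exact EReal.add_top_of_ne_bot (h a (Finset.mem_cons_self a s))

lemma klTerm_ne_bot (a b c : ℝ) : klTerm a b c ≠ ⊥ := by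
  rw [klTerm]
  split_ifs
  · simp
  · simp
  · exact EReal.coe_ne_bot _

end ERealHelpers


section RiskLemmas
variable {Θ X Y : Type*} [Fintype X] [Fintype Y]
variable (p : X → Y → Θ → ℝ)

lemma risk_eq_top (q : X → Y → ℝ) (θ : Θ) (x0 : X) (y0 : Y)
    (hq : q x0 y0 = 0) (hp : p x0 y0 θ ≠ 0) : risk p q θ = ⊤ := by
  rw [risk]
  apply esum_eq_top
  · intro x _
    exact esum_ne_bot _ _ fun y _ => klTerm_ne_bot _ _ _
  · refine ⟨x0, Finset.mem_univ x0, ?_⟩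
    apply esum_eq_top
    · intro y _; exact klTerm_ne_bot _ _ _
    · refine ⟨y0, Finset.mem_univ y0, ?_⟩
      rw [klTerm, if_neg hp, if_pos hq]

lemma risk_eq_coe (q : X → Y → ℝ) (θ : Θ)
    (hnn : ∀ x y, 0 ≤ p x y θ) (h : ∀ x y, q x y = 0 → p x y θ = 0) :
    risk p q θ = ((fpay q (zmap p θ) : ℝ) : EReal) := by
  set S : X → ℝ := fun x => ∑ y' : Y, p x y' θ with hS
  set rterm : X → Y → ℝ := fun x y =>
    negEnt (p x y θ) - p x y θ * Real.log (S x) - p x y θ * Real.log (q x y) with hrt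
  have hterm : ∀ x y, klTerm (p x y θ) (p x y θ / S x) (q x y) = ((rterm x y : ℝ) : EReal) := by
    intro x y
    rcases eq_or_ne (p x y θ) 0 with h0 | h0
    · rw [klTerm, if_pos h0, hrt]
      simp [h0, negEnt]
    · have hppos : 0 < p x y θ := lt_of_le_of_ne (hnn x y) (Ne.symm h0)
      have hqpos : q x y ≠ 0 := fun hq => h0 (h x y hq)
      have hSpos : 0 < S x :=
        lt_of_lt_of_le hppos (Finset.single_le_sum (fun y' _ => hnn x y') (Finset.mem_univ y))
      rw [klTerm, if_neg h0, if_neg hqpos]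
      congr 1
      rw [hrt]
      rw [Real.log_div (div_ne_zero h0 (ne_of_gt hSpos)) hqpos,
        Real.log_div h0 (ne_of_gt hSpos)]
      simp only [negEnt]
      ring
  have hsum : risk p q θ = ((∑ x : X, ∑ y : Y, rterm x y : ℝ) : EReal) := by
    rw [risk, coe_esum]
    refine Finset.sum_congr rfl fun x _ => ?_
    rw [coe_esum]
    exact Finset.sum_congr rfl fun y _ => hterm x y
  rw [hsum]
  congr 1
  -- real identity
  have hrow : ∀ x, ∑ y : Y, rterm x y
      = (∑ y : Y, negEnt (p x y θ)) - negEnt (S x) - ∑ y : Y, p x y θ * Real.log (q x y) := by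
    intro x
    rw [hrt]
    simp only
    rw [Finset.sum_sub_distrib, Finset.sum_sub_distrib, ← Finset.sum_mul]
    rw [show (∑ y : Y, p x y θ) = S x from rfl]
    rw [show negEnt (S x) = S x * Real.log (S x) from rfl]
  rw [show (∑ x : X, ∑ y : Y, rterm x y) = _ from Finset.sum_congr rfl fun x _ => hrow x]
  rw [fpay, zmap]
  simp only
  rw [gfun]
  rw [Finset.sum_sub_distrib, Finset.sum_sub_distrib]


end RiskLemmas

section GoodDensity
variable {X Y : Type*} [Fintype X] [Fintype Y]

/-- For each admissible `z` and `δ > 0`, there is a positive predictive density whose payoff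
at `z` is within `δ` of `Ffun z`. -/
lemma fpay_good [Nonempty Y] (z : ℝ × (X → Y → ℝ)) (hz2 : ∀ x y, 0 ≤ z.2 x y)
    (hzsum : ∑ x : X, ∑ y : Y, z.2 x y = 1) {δ : ℝ} (hδ : 0 < δ) :
    ∃ q, PosDensity q ∧ fpay q z ≤ Ffun z + δ := by
  set c : ℝ := Real.exp (-δ) with hc
  have hc0 : 0 < c := Real.exp_pos _
  have hc1 : c < 1 := by
    rw [hc]
    calc Real.exp (-δ) < Real.exp 0 := Real.exp_lt_exp.mpr (by linarith)
      _ = 1 := Real.exp_zero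
  have hlogc : Real.log c = -δ := by rw [hc, Real.log_exp]
  have hY : (0:ℝ) < Fintype.card Y := by exact_mod_cast Fintype.card_pos
  set S : X → ℝ := fun x => ∑ y : Y, z.2 x y with hS
  have hSnn : ∀ x, 0 ≤ S x := fun x => Finset.sum_nonneg fun y _ => hz2 x y
  set qc : X → Y → ℝ := fun x y =>
    if h : 0 < S x then z.2 x y / S x else (Fintype.card Y : ℝ)⁻¹ with hqc
  set q : X → Y → ℝ := fun x y => c * qc x y + (1 - c) * (Fintype.card Y : ℝ)⁻¹ with hq
  have hqcnn : ∀ x y, 0 ≤ qc x y := by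
    intro x y
    simp only [hqc]
    split_ifs with h
    · exact div_nonneg (hz2 x y) (hSnn x)
    · positivity
  have hqpos : ∀ x y, 0 < q x y := by
    intro x y
    have h2 : 0 < (1 - c) * (Fintype.card Y : ℝ)⁻¹ := by
      apply mul_pos (by linarith)
      positivity
    have h1 : 0 ≤ c * qc x y := mul_nonneg hc0.le (hqcnn x y)
    rw [hq]; dsimp only; linarith
  have hqcsum : ∀ x, ∑ y : Y, qc x y = 1 := by
    intro x
    simp only [hqc]
    split_ifs with h
    · rw [← Finset.sum_div]
      rw [show (∑ y : Y, z.2 x y) = S x from rfl]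
      field_simp
    · rw [Finset.sum_const, Finset.card_univ, nsmul_eq_mul]
      field_simp
  have hqsum : ∀ x, ∑ y : Y, q x y = 1 := by
    intro x
    rw [hq]
    dsimp only
    rw [Finset.sum_add_distrib, ← Finset.mul_sum, hqcsum x, ← Finset.mul_sum,
      Finset.sum_const, Finset.card_univ, nsmul_eq_mul]
    field_simp
    ring
  refine ⟨q, ⟨hqpos, hqsum⟩, ?_⟩
  -- termwise bound
  have hterm : ∀ x y, - (z.2 x y * Real.log (q x y))
      ≤ - negEnt (z.2 x y) + z.2 x y * Real.log (S x) + z.2 x y * δ := by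
    intro x y
    rcases eq_or_lt_of_le (hz2 x y) with h0 | h0
    · rw [← h0]; simp [negEnt]
    · have hSx : 0 < S x :=
        lt_of_lt_of_le h0 (Finset.single_le_sum (fun y' _ => hz2 x y') (Finset.mem_univ y))
      have hqge : c * (z.2 x y / S x) ≤ q x y := by
        have h2 : 0 ≤ (1 - c) * (Fintype.card Y : ℝ)⁻¹ := by
          apply mul_nonneg (by linarith)
          positivity
        simp only [hq, hqc]
        rw [dif_pos hSx]
        linarith
      have hqgt : 0 < c * (z.2 x y / S x) := mul_pos hc0 (div_pos h0 hSx)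
      have hlog : Real.log (c * (z.2 x y / S x)) ≤ Real.log (q x y) :=
        Real.log_le_log hqgt hqge
      have hexpand : Real.log (c * (z.2 x y / S x))
          = -δ + Real.log (z.2 x y) - Real.log (S x) := by
        rw [Real.log_mul (ne_of_gt hc0) (ne_of_gt (div_pos h0 hSx)),
          Real.log_div (ne_of_gt h0) (ne_of_gt hSx), hlogc]
        ring
      have : - (z.2 x y * Real.log (q x y)) ≤ - (z.2 x y * Real.log (c * (z.2 x y / S x))) := by
        apply neg_le_neg
        exact mul_le_mul_of_nonneg_left hlog (hz2 x y)
      refine this.trans ?_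
      rw [hexpand]
      simp only [negEnt]
      ring_nf
      nlinarith [hz2 x y]
  -- sum up
  have hsum : - (∑ x : X, ∑ y : Y, z.2 x y * Real.log (q x y))
      ≤ PhiFn z.2 + δ := by
    have h1 : - (∑ x : X, ∑ y : Y, z.2 x y * Real.log (q x y))
        = ∑ x : X, ∑ y : Y, - (z.2 x y * Real.log (q x y)) := by
      simp [Finset.sum_neg_distrib]
    rw [h1]
    have h2 : ∑ x : X, ∑ y : Y, - (z.2 x y * Real.log (q x y))
        ≤ ∑ x : X, ∑ y : Y,
          (- negEnt (z.2 x y) + z.2 x y * Real.log (S x) + z.2 x y * δ) :=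
      Finset.sum_le_sum fun x _ => Finset.sum_le_sum fun y _ => hterm x y
    refine h2.trans ?_
    have h3 : ∀ x, ∑ y : Y, (- negEnt (z.2 x y) + z.2 x y * Real.log (S x) + z.2 x y * δ)
        = (∑ y : Y, - negEnt (z.2 x y)) + negEnt (S x) + (∑ y : Y, z.2 x y) * δ := by
      intro x
      rw [Finset.sum_add_distrib, Finset.sum_add_distrib, ← Finset.sum_mul, ← Finset.sum_mul]
      rw [show negEnt (S x) = (∑ y : Y, z.2 x y) * Real.log (S x) from rfl]
    rw [show ∑ x : X, ∑ y : Y, (- negEnt (z.2 x y) + z.2 x y * Real.log (S x) + z.2 x y * δ)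
      = _ from Finset.sum_congr rfl fun x _ => h3 x]
    have hzsum' : (∑ x : X, ∑ y : Y, z.2 x y) = 1 := hzsum
    rw [Finset.sum_add_distrib, Finset.sum_add_distrib, ← Finset.sum_mul, hzsum', one_mul]
    rw [PhiFn]
    simp only [Finset.sum_neg_distrib]
    rw [show (∑ x : X, negEnt (S x)) = ∑ x : X, negEnt (∑ y : Y, z.2 x y) from rfl]
  calc fpay q z = z.1 + (- ∑ x : X, ∑ y : Y, z.2 x y * Real.log (q x y)) := by
        rw [fpay]; ring
    _ ≤ z.1 + (PhiFn z.2 + δ) := by linarith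
    _ = Ffun z + δ := by rw [Ffun]; ring


end GoodDensity

section FfunCont
variable {X Y : Type*} [Fintype X] [Fintype Y]
lemma continuous_Ffun : Continuous (Ffun (X := X) (Y := Y)) := by
  apply Continuous.add continuous_fst
  have h1 : Continuous fun z : ℝ × (X → Y → ℝ) => ∑ x : X, ∑ y : Y, negEnt (z.2 x y) :=
    continuous_finset_sum _ fun x _ => continuous_finset_sum _ fun y _ =>
      Real.continuous_mul_log.comp
        ((continuous_apply y).comp ((continuous_apply x).comp continuous_snd))
  have h2 : Continuous fun z : ℝ × (X → Y → ℝ) => ∑ x : X, negEnt (∑ y : Y, z.2 x y) :=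
    continuous_finset_sum _ fun x _ => Real.continuous_mul_log.comp
      (continuous_finset_sum _ fun y _ =>
        (continuous_apply y).comp ((continuous_apply x).comp continuous_snd))
  exact (h1.neg.add h2)
end FfunCont



section MeasureLemmas
variable {Θ X Y : Type*} [MetricSpace Θ] [CompactSpace Θ] [Nonempty Θ]
    [MeasurableSpace Θ] [BorelSpace Θ] [Fintype X] [Fintype Y]

/-- every continuous real function on a compact space is integrable -/
lemma integrable_of_cont (f : Θ → ℝ) (hf : Continuous f) (μ : Measure Θ) [IsFiniteMeasure μ] :
    Integrable f μ := by
  apply hf.integrable_of_hasCompactSupport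
  exact IsCompact.of_isClosed_subset isCompact_univ (isClosed_tsupport f) (Set.subset_univ _)

variable (p : X → Y → Θ → ℝ)

variable (hc : ∀ x y, Continuous (p x y))
include hc

lemma continuous_gfun : Continuous (gfun p) := by
  apply Continuous.sub
  · exact continuous_finset_sum _ fun x _ => continuous_finset_sum _ fun y _ =>
      Real.continuous_mul_log.comp (hc x y)
  · exact continuous_finset_sum _ fun x _ =>
      Real.continuous_mul_log.comp (continuous_finset_sum _ fun y _ => hc x y)

lemma continuous_zmap : Continuous (zmap p) := by
  apply Continuous.prodMk (continuous_gfun p hc)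
  exact continuous_pi fun x => continuous_pi fun y => hc x y

lemma condMutualInfo_eq (π : ProbabilityMeasure Θ) :
    condMutualInfo p π = (∫ θ, gfun p θ ∂(π : Measure Θ))
      + PhiFn (fun x y => pMix p π x y) := by
  have hint1 : Integrable (fun θ => ∑ x : X, ∑ y : Y, negEnt (p x y θ)) (π : Measure Θ) :=
    integrable_of_cont _ (continuous_finset_sum _ fun x _ => continuous_finset_sum _ fun y _ =>
      Real.continuous_mul_log.comp (hc x y)) _
  have hint2 : Integrable (fun θ => ∑ x : X, negEnt (∑ y : Y, p x y θ)) (π : Measure Θ) :=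
    integrable_of_cont _ (continuous_finset_sum _ fun x _ =>
      Real.continuous_mul_log.comp (continuous_finset_sum _ fun y _ => hc x y)) _
  rw [condMutualInfo, PhiFn]
  rw [show gfun p = fun θ => (∑ x : X, ∑ y : Y, negEnt (p x y θ))
    - ∑ x : X, negEnt (∑ y : Y, p x y θ) from rfl]
  rw [integral_sub hint1 hint2]
  ring

/-- The easy direction bound: for any predictive density `q` compatible with `p`,
`I(π)` is bounded by the max of `fpay q` over the parameter space. -/
lemma I_le_sup (hnn : ∀ x y θ, 0 ≤ p x y θ)
    (q : X → Y → ℝ) (hq : ∀ x y, 0 ≤ q x y) (hq1 : ∀ x, ∑ y : Y, q x y = 1)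
    (hq0 : ∀ x y, q x y = 0 → ∀ θ, p x y θ = 0) :
    ∃ θstar : Θ, ∀ π : ProbabilityMeasure Θ,
      condMutualInfo p π ≤ fpay q (zmap p θstar) := by
  have hρc : Continuous (fun θ => fpay q (zmap p θ)) :=
    (continuous_fpay q).comp (continuous_zmap p hc)
  obtain ⟨θstar, -, hθstar⟩ := isCompact_univ.exists_isMaxOn Set.univ_nonempty hρc.continuousOn
  have hθstar : ∀ θ : Θ, fpay q (zmap p θ) ≤ fpay q (zmap p θstar) :=
    fun θ => hθstar (Set.mem_univ θ)
  refine ⟨θstar, fun π => ?_⟩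
  haveI : IsProbabilityMeasure (π : Measure Θ) := π.prop
  set m : X → Y → ℝ := fun x y => pMix p π x y with hm
  have hmnn : ∀ x y, 0 ≤ m x y := fun x y => integral_nonneg (fun θ => hnn x y θ)
  have hpos : ∀ x y, 0 < m x y → 0 < q x y := by
    intro x y hmxy
    rcases lt_or_eq_of_le (hq x y) with h | h
    · exact h
    · exfalso
      have : m x y = 0 := by
        rw [hm]
        simp only [pMix]
        have : (fun θ => p x y θ) = fun _ => (0:ℝ) := funext fun θ => hq0 x y h.symm θ
        rw [show (∫ θ, p x y θ ∂(π : Measure Θ)) = ∫ _, (0:ℝ) ∂(π : Measure Θ) by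
          exact integral_congr_ae (Filter.Eventually.of_forall fun θ => hq0 x y h.symm θ)]
        simp
      rw [this] at hmxy
      exact lt_irrefl 0 hmxy
  have hPhi : PhiFn m ≤ - ∑ x : X, ∑ y : Y, m x y * Real.log (q x y) :=
    PhiFn_le m q hmnn hq (fun x => (hq1 x).le) hpos
  have hswap : ∑ x : X, ∑ y : Y, m x y * Real.log (q x y)
      = ∫ θ, ∑ x : X, ∑ y : Y, p x y θ * Real.log (q x y) ∂(π : Measure Θ) := by
    rw [integral_finset_sum _ (fun x _ => integrable_of_cont _
      (continuous_finset_sum _ fun y _ => (hc x y).mul_const _) _)]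
    refine Finset.sum_congr rfl fun x _ => ?_
    rw [integral_finset_sum _ (fun y _ => integrable_of_cont _
      ((hc x y).mul_const _) _)]
    refine Finset.sum_congr rfl fun y _ => ?_
    rw [hm]
    simp only [pMix]
    rw [← integral_mul_const]
  have hrho : ∀ θ, fpay q (zmap p θ) = gfun p θ - ∑ x : X, ∑ y : Y,
      p x y θ * Real.log (q x y) := fun θ => rfl
  calc condMutualInfo p π = (∫ θ, gfun p θ ∂(π : Measure Θ)) + PhiFn m :=
        condMutualInfo_eq p hc π
    _ ≤ (∫ θ, gfun p θ ∂(π : Measure Θ))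
        - ∑ x : X, ∑ y : Y, m x y * Real.log (q x y) := by linarith
    _ = ∫ θ, fpay q (zmap p θ) ∂(π : Measure Θ) := by
        rw [hswap, ← integral_sub (integrable_of_cont _ (continuous_gfun p hc) _)
          (integrable_of_cont _ (continuous_finset_sum _ fun x _ =>
            continuous_finset_sum _ fun y _ => (hc x y).mul_const _) _)]
        exact integral_congr_ae (Filter.Eventually.of_forall fun θ => (hrho θ).symm)
    _ ≤ ∫ _, fpay q (zmap p θstar) ∂(π : Measure Θ) := by
        apply integral_mono (integrable_of_cont _ hρc _) (integrable_const _)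
        intro θ
        exact hθstar θ
    _ = fpay q (zmap p θstar) := by
        rw [integral_const]
        simp

omit hc

lemma discrete_measure_exists {ι : Type*} (t : Finset ι) (w : ι → ℝ) (θs : ι → Θ)
    (hw : ∀ i ∈ t, 0 ≤ w i) (hw1 : ∑ i ∈ t, w i = 1) :
    ∃ π : ProbabilityMeasure Θ, ∀ f : Θ → ℝ, Continuous f →
      ∫ θ, f θ ∂(π : Measure Θ) = ∑ i ∈ t, w i * f (θs i) := by
  set μ : Measure Θ := ∑ i ∈ t, (ENNReal.ofReal (w i)) • Measure.dirac (θs i) with hμ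
  have hμuniv : μ Set.univ = 1 := by
    rw [hμ, Measure.finset_sum_apply]
    simp only [Measure.smul_apply, smul_eq_mul, measure_univ, mul_one]
    rw [← ENNReal.ofReal_sum_of_nonneg hw, hw1, ENNReal.ofReal_one]
  haveI hprob : IsProbabilityMeasure μ := ⟨hμuniv⟩
  refine ⟨⟨μ, hprob⟩, fun f hf => ?_⟩
  have hint : ∀ i ∈ t, Integrable f ((ENNReal.ofReal (w i)) • Measure.dirac (θs i)) := by
    intro i _
    exact (integrable_of_cont f hf _).smul_measure ENNReal.ofReal_ne_top
  show ∫ θ, f θ ∂μ = _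
  rw [hμ, integral_finset_sum_measure hint]
  refine Finset.sum_congr rfl fun i hi => ?_
  rw [integral_smul_measure, integral_dirac' f (θs i) hf.stronglyMeasurable,
    ENNReal.toReal_ofReal (hw i hi), smul_eq_mul]

lemma Ffun_le_iSup (hc : ∀ x y, Continuous (p x y))
    (hbdd : BddAbove (Set.range fun π : ProbabilityMeasure Θ => condMutualInfo p π)) :
    ∀ z ∈ convexHull ℝ (Set.range (zmap p)),
      Ffun z ≤ ⨆ π : ProbabilityMeasure Θ, condMutualInfo p π := by
  intro z hz
  rw [convexHull_eq] at hz
  obtain ⟨ι, t, w, zf, hw, hw1, hmem, hcm⟩ := hz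
  have hex : ∀ i ∈ t, ∃ θ, zmap p θ = zf i := fun i hi => Set.mem_range.mp (hmem i hi)
  choose! θs hθs using hex
  obtain ⟨π, hπ⟩ := discrete_measure_exists t w θs hw hw1
  have hzsum : z = ∑ i ∈ t, w i • zf i := by
    rw [← hcm, Finset.centerMass_eq_of_sum_1 _ _ hw1]
  have hfst : ∫ θ, gfun p θ ∂(π : Measure Θ) = z.1 := by
    rw [hπ (gfun p) (continuous_gfun p hc), hzsum, Prod.fst_sum]
    refine Finset.sum_congr rfl fun i hi => ?_
    rw [Prod.smul_fst, smul_eq_mul, ← hθs i hi]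
    rfl
  have hsnd : ∀ x y, pMix p π x y = z.2 x y := by
    intro x y
    rw [pMix, hπ (p x y) (hc x y), hzsum, Prod.snd_sum]
    rw [Finset.sum_apply, Finset.sum_apply]
    refine Finset.sum_congr rfl fun i hi => ?_
    rw [Prod.smul_snd, Pi.smul_apply, Pi.smul_apply, smul_eq_mul, ← hθs i hi]
    rfl
  have hI : condMutualInfo p π = Ffun z := by
    rw [condMutualInfo_eq p hc π, Ffun, hfst]
    congr 1
    have : (fun x y => pMix p π x y) = z.2 := by
      funext x y; exact hsnd x y
    rw [this]
  rw [← hI]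
  exact le_ciSup hbdd π


end MeasureLemmas

/-- The minimax value of the KL prediction problem equals the maximal conditional mutual
information: `inf_q sup_θ R(θ,q) = sup_π I_{θ,y|x}(π)`. -/
theorem minimax_value_eq_sup_condMutualInfo
    {Θ X Y : Type*} [MetricSpace Θ] [CompactSpace Θ] [Nonempty Θ]
    [MeasurableSpace Θ] [BorelSpace Θ] [Fintype X] [Fintype Y]
    (p : X → Y → Θ → ℝ)
    (hc : ∀ x y, Continuous (p x y))
    (hnn : ∀ x y θ, 0 ≤ p x y θ)
    (hsum : ∀ θ : Θ, ∑ x : X, ∑ y : Y, p x y θ = 1) :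
    (⨅ q : {q : X → Y → ℝ // IsPredDensity q}, ⨆ θ : Θ, risk p q.val θ)
      = (((⨆ π : ProbabilityMeasure Θ, condMutualInfo p π : ℝ)) : EReal) := by
  classical
  -- Y is nonempty
  haveI hY : Nonempty Y := by
    by_contra h
    rw [not_nonempty_iff] at h
    have h1 := hsum (Classical.arbitrary Θ)
    simp only [Finset.univ_eq_empty, Finset.sum_empty, Finset.sum_const_zero] at h1
    exact one_ne_zero h1.symm
  haveI : Nonempty (ProbabilityMeasure Θ) :=
    ⟨⟨Measure.dirac (Classical.arbitrary Θ), inferInstance⟩⟩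
  set C : ℝ := ⨆ π : ProbabilityMeasure Θ, condMutualInfo p π with hC
  -- uniform density gives a uniform bound
  have hcard : (0:ℝ) < Fintype.card Y := by exact_mod_cast Fintype.card_pos
  set qu : X → Y → ℝ := fun _ _ => (Fintype.card Y : ℝ)⁻¹ with hqu
  have hqunn : ∀ x y, 0 ≤ qu x y := fun x y => by positivity
  have hqupos : ∀ x y, 0 < qu x y := fun x y => by positivity
  have hqusum : ∀ x, ∑ y : Y, qu x y = 1 := by
    intro x
    rw [hqu]
    rw [Finset.sum_const, Finset.card_univ, nsmul_eq_mul]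
    field_simp
  obtain ⟨θu, hθu⟩ := I_le_sup p hc hnn qu hqunn hqusum
    (fun x y hz => absurd hz (ne_of_gt (hqupos x y)))
  have hbdd : BddAbove (Set.range fun π : ProbabilityMeasure Θ => condMutualInfo p π) := by
    refine ⟨fpay qu (zmap p θu), ?_⟩
    rintro _ ⟨π, rfl⟩
    exact hθu π
  -- LOWER BOUND
  have hlow : ((C : ℝ) : EReal)
      ≤ ⨅ q : {q : X → Y → ℝ // IsPredDensity q}, ⨆ θ : Θ, risk p q.val θ := by
    apply le_iInf
    rintro ⟨q, hq⟩
    by_cases hq0 : ∀ x y, q x y = 0 → ∀ θ, p x y θ = 0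
    · obtain ⟨θs, hθs⟩ := I_le_sup p hc hnn q (fun x y => (hq.1 x y).1) hq.2 hq0
      have hCle : C ≤ fpay q (zmap p θs) := ciSup_le fun π => hθs π
      have heq : risk p q θs = ((fpay q (zmap p θs) : ℝ) : EReal) :=
        risk_eq_coe p q θs (fun x y => hnn x y θs) (fun x y hz => hq0 x y hz θs)
      calc ((C : ℝ) : EReal) ≤ ((fpay q (zmap p θs) : ℝ) : EReal) :=
            EReal.coe_le_coe_iff.mpr hCle
        _ = risk p q θs := heq.symm
        _ ≤ ⨆ θ : Θ, risk p q θ := le_iSup _ θs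
    · push_neg at hq0
      obtain ⟨x0, y0, hq00, θ0, hp0⟩ := hq0
      have heq : risk p q θ0 = ⊤ := risk_eq_top p q θ0 x0 y0 hq00 hp0
      calc ((C : ℝ) : EReal) ≤ ⊤ := le_top
        _ = risk p q θ0 := heq.symm
        _ ≤ ⨆ θ : Θ, risk p q θ := le_iSup _ θ0
  -- UPPER BOUND
  have hupp : ∀ β : ℝ, C < β →
      (⨅ q : {q : X → Y → ℝ // IsPredDensity q}, ⨆ θ : Θ, risk p q.val θ)
        ≤ ((β : ℝ) : EReal) := by
    intro β hβ
    set γ : ℝ := (C + β) / 2 with hγ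
    have hCγ : C < γ := by rw [hγ]; linarith
    have hγβ : γ < β := by rw [hγ]; linarith
    set Γ : Set (ℝ × (X → Y → ℝ)) := Set.range (zmap p) with hΓ
    have hΓcomp : IsCompact Γ := isCompact_range (continuous_zmap p hc)
    set A : Set (ℝ × (X → Y → ℝ)) := closure (convexHull ℝ Γ) with hA
    have hAconv : Convex ℝ A := (convex_convexHull ℝ Γ).closure
    have hAcomp : IsCompact A := by
      apply Metric.isCompact_of_isClosed_isBounded isClosed_closure
      exact (isBounded_convexHull.mpr hΓcomp.isBounded).closure
    -- membership facts
    set W : Set (ℝ × (X → Y → ℝ)) :=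
      {z | (∀ x y, 0 ≤ z.2 x y) ∧ ∑ x : X, ∑ y : Y, z.2 x y = 1} with hW
    have hWclosed : IsClosed W := by
      have : W = (⋂ x : X, ⋂ y : Y, {z : ℝ × (X → Y → ℝ) | 0 ≤ z.2 x y})
          ∩ {z : ℝ × (X → Y → ℝ) | ∑ x : X, ∑ y : Y, z.2 x y = 1} := by
        ext z
        simp only [hW, Set.mem_setOf_eq, Set.mem_inter_iff, Set.mem_iInter]
      rw [this]
      apply IsClosed.inter
      · exact isClosed_iInter fun x => isClosed_iInter fun y =>
          isClosed_le continuous_const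
            ((continuous_apply y).comp ((continuous_apply x).comp continuous_snd))
      · exact isClosed_eq (continuous_finset_sum _ fun x _ => continuous_finset_sum _ fun y _ =>
          (continuous_apply y).comp ((continuous_apply x).comp continuous_snd)) continuous_const
    have hWconv : Convex ℝ W := by
      intro z hz z' hz' a b ha hb hab
      constructor
      · intro x y
        have : (a • z + b • z').2 x y = a * z.2 x y + b * z'.2 x y := rfl
        rw [this]
        exact add_nonneg (mul_nonneg ha (hz.1 x y)) (mul_nonneg hb (hz'.1 x y))
      · have hterm : ∀ x y, (a • z + b • z').2 x y = a * z.2 x y + b * z'.2 x y := fun x y => rfl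
        calc ∑ x : X, ∑ y : Y, (a • z + b • z').2 x y
            = ∑ x : X, ∑ y : Y, (a * z.2 x y + b * z'.2 x y) := by
              exact Finset.sum_congr rfl fun x _ => Finset.sum_congr rfl fun y _ => hterm x y
          _ = a * (∑ x : X, ∑ y : Y, z.2 x y) + b * (∑ x : X, ∑ y : Y, z'.2 x y) := by
              simp only [Finset.sum_add_distrib, Finset.mul_sum]
          _ = 1 := by rw [hz.2, hz'.2]; linarith
    have hΓW : Γ ⊆ W := by
      rintro _ ⟨θ, rfl⟩
      exact ⟨fun x y => hnn x y θ, hsum θ⟩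
    have hAW : A ⊆ W := by
      rw [hA]
      exact closure_minimal (convexHull_min hΓW hWconv) hWclosed
    have hFle : ∀ z ∈ A, Ffun z ≤ C := by
      have hle : ∀ z ∈ convexHull ℝ Γ, Ffun z ≤ C := Ffun_le_iSup p hc hbdd
      intro z hz
      have hsubset : closure (convexHull ℝ Γ) ⊆ {z | Ffun z ≤ C} :=
        closure_minimal (fun w hw => hle w hw) (isClosed_le continuous_Ffun continuous_const)
      exact hsubset hz
    -- pointwise good densities
    have hcov : ∀ z ∈ A, ∃ qp : {q : X → Y → ℝ // PosDensity q}, fpay qp.1 z < γ := by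
      intro z hz
      obtain ⟨hz2, hzs⟩ := hAW hz
      have hδ : 0 < (γ - Ffun z) / 2 := by
        have := hFle z hz
        linarith
      obtain ⟨q, hqpos, hqle⟩ := fpay_good z hz2 hzs hδ
      refine ⟨⟨q, hqpos⟩, ?_⟩
      have := hFle z hz
      calc fpay q z ≤ Ffun z + (γ - Ffun z) / 2 := hqle
        _ < γ := by linarith
    -- finite subcover
    set U : {q : X → Y → ℝ // PosDensity q} → Set (ℝ × (X → Y → ℝ)) :=
      fun qp => {z | fpay qp.1 z < γ} with hU
    have hUopen : ∀ qp, IsOpen (U qp) := fun qp =>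
      isOpen_lt (continuous_fpay qp.1) continuous_const
    have hUcov : A ⊆ ⋃ qp, U qp := by
      intro z hz
      obtain ⟨qp, h⟩ := hcov z hz
      exact Set.mem_iUnion.mpr ⟨qp, h⟩
    obtain ⟨s, hs⟩ := hAcomp.elim_finite_subcover U hUopen hUcov
    set n := s.card with hn
    set e : {x // x ∈ s} ≃ Fin n := s.equivFin with he
    set qs : Fin n → X → Y → ℝ := fun i => ((e.symm i : {x // x ∈ s}) :
      {q : X → Y → ℝ // PosDensity q}).1 with hqs
    have hqsP : ∀ i, PosDensity (qs i) := fun i => ((e.symm i : {x // x ∈ s}) :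
      {q : X → Y → ℝ // PosDensity q}).2
    have hcov' : ∀ z ∈ A, ∃ i, fpay (qs i) z ≤ γ := by
      intro z hz
      have := hs hz
      rw [Set.mem_iUnion₂] at this
      obtain ⟨qp, hqps, hzU⟩ := this
      refine ⟨e ⟨qp, hqps⟩, ?_⟩
      have hqs_eq : qs (e ⟨qp, hqps⟩) = qp.1 := by
        rw [hqs]
        simp only [Equiv.symm_apply_apply]
      rw [hqs_eq]
      exact le_of_lt hzU
    obtain ⟨qstar, hqstarpos, hqstarlt⟩ := komiya_finite n A hAcomp hAconv
      (fun z hz => (hAW hz).1) qs hqsP hγβ hcov'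
    have hqstarpd : IsPredDensity qstar := by
      constructor
      · intro x y
        refine ⟨(hqstarpos.1 x y).le, ?_⟩
        calc qstar x y ≤ ∑ y' : Y, qstar x y' :=
              Finset.single_le_sum (fun y' _ => (hqstarpos.1 x y').le) (Finset.mem_univ y)
          _ = 1 := hqstarpos.2 x
      · exact hqstarpos.2
    refine le_trans (iInf_le _ ⟨qstar, hqstarpd⟩) ?_
    apply iSup_le
    intro θ
    rw [risk_eq_coe p qstar θ (fun x y => hnn x y θ)
      (fun x y h0 => absurd h0 (ne_of_gt (hqstarpos.1 x y)))]
    apply EReal.coe_le_coe_iff.mpr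
    have hzA : zmap p θ ∈ A :=
      subset_closure (subset_convexHull ℝ Γ (Set.mem_range_self θ))
    exact (hqstarlt (zmap p θ) hzA).le
  -- combine
  apply le_antisymm
  · by_contra hlt
    push_neg at hlt
    obtain ⟨β, hβ1, hβ2⟩ := EReal.exists_between_coe_real hlt
    exact absurd (hupp β (EReal.coe_lt_coe_iff.mp hβ1)) (not_le.mpr hβ2)
  · exact hlow
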